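/- Let Q ≥ 0 be a function on the half ball B₁⁺(x*) = {(x,y): |x-x*|²+y² < 1, y > 0} ⊂ ℝ^{n+1} satisfying (in the viscosity/classical sense) Δ_a Q ≤ -1 in the interior and the Neumann-type bound |∂_y^{1-a} Q| ≤ C₀ Q on {y = 0}, where a ∈ (-1,0), ∂_y^{1-a}Q(x) = lim_{y→0⁺} y^a Q_y(x,y). Then there is μ > 0 depending only on n, a, C₀ such that Q(x,y) ≥ μ² + μ y^{1-a} - (1/(2(n+1)))(|x-x*|² + y²) on B₁⁺(x*); in particular Q(x*,0) ≥ μ². -/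

import Mathlib

set_option maxHeartbeats 1000000
open Real Set Filter Topology

lemma key1d (g g' : ℝ → ℝ) (c δ : ℝ) (hδ : 0 < δ)
    (hg : ∀ t ∈ Set.Ioo (-δ) δ, HasDerivAt g (g' t) t)
    (hg' : HasDerivAt g' c 0)
    (hmin : ∀ t ∈ Set.Ioo (-δ) δ, g 0 ≤ g t) :
    g' 0 = 0 ∧ 0 ≤ c := by
  have h0 : (0:ℝ) ∈ Set.Ioo (-δ) δ := ⟨by linarith, hδ⟩
  have hloc : IsLocalMin g 0 :=
    Filter.eventually_of_mem (Ioo_mem_nhds (by linarith) hδ) hmin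
  have hg0 : g' 0 = 0 := hloc.hasDerivAt_eq_zero (hg 0 h0)
  refine ⟨hg0, ?_⟩
  by_contra hc
  push_neg at hc
  have hslope : Tendsto (slope g' 0) (𝓝[>] 0) (𝓝 c) :=
    (hasDerivAt_iff_tendsto_slope.1 hg').mono_left
      (nhdsWithin_mono _ (fun x hx => ne_of_gt hx))
  have hev : ∀ᶠ t in 𝓝[>] (0:ℝ), slope g' 0 t < 0 := hslope.eventually (gt_mem_nhds hc)
  have hIoo : Set.Ioo (0:ℝ) δ ∈ 𝓝[>] (0:ℝ) := Ioo_mem_nhdsGT_of_mem ⟨le_refl 0, hδ⟩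
  obtain ⟨u, hu, hsub⟩ := mem_nhdsGT_iff_exists_Ioo_subset.1
    (Filter.inter_mem hev hIoo)
  have hu0 : (0:ℝ) < u := hu
  set t₀ := min u δ / 2 with ht₀def
  have ht₀pos : 0 < t₀ := by
    have h1 : 0 < min u δ := lt_min hu0 hδ
    positivity
  have ht₀u : t₀ < u := by
    have := min_le_left u δ
    simp only [ht₀def]; linarith
  have ht₀δ : t₀ < δ := by
    have := min_le_right u δ
    simp only [ht₀def]; linarith
  -- g' negative on Ioo 0 t₀ (in fact on Ioo 0 u)
  have hg'neg : ∀ t ∈ Set.Ioo (0:ℝ) u, g' t < 0 := by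
    intro t ht
    have h : slope g' 0 t < 0 := (hsub ht).1
    rw [slope_def_field, hg0, sub_zero, sub_zero] at h
    have htpos : 0 < t := ht.1
    by_contra hge
    push_neg at hge
    have : 0 ≤ g' t / t := div_nonneg hge htpos.le
    linarith
  have hanti : StrictAntiOn g (Set.Icc 0 t₀) := by
    apply strictAntiOn_of_deriv_neg (convex_Icc 0 t₀)
    · intro x hx
      have hxm : x ∈ Set.Ioo (-δ) δ := ⟨by linarith [hx.1], by linarith [hx.2]⟩
      exact (hg x hxm).continuousAt.continuousWithinAt
    · intro x hx
      rw [interior_Icc] at hx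
      have hxm : x ∈ Set.Ioo (-δ) δ := ⟨by linarith [hx.1], by linarith [hx.2]⟩
      rw [(hg x hxm).deriv]
      exact hg'neg x ⟨hx.1, lt_of_lt_of_le hx.2 (le_of_lt ht₀u)⟩
  have : g t₀ < g 0 := hanti ⟨le_refl 0, ht₀pos.le⟩ ⟨ht₀pos.le, le_refl t₀⟩ ht₀pos
  have := hmin t₀ ⟨by linarith, ht₀δ⟩
  linarith

lemma dirDeriv {E : Type*} [NormedAddCommGroup E] [NormedSpace ℝ E]
    {U : Set E} (hU : IsOpen U) {Q : E → ℝ} (hQ : ContDiffOn ℝ 2 Q U)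
    {p₀ : E} (hp : p₀ ∈ U) (v : E) :
    ∃ δ : ℝ, 0 < δ ∧ (∀ t : ℝ, t ∈ Set.Ioo (-δ) δ → p₀ + t • v ∈ U ∧
        HasDerivAt (fun s => Q (p₀ + s • v)) (fderiv ℝ Q (p₀ + t • v) v) t) ∧
      HasDerivAt (fun t : ℝ => fderiv ℝ Q (p₀ + t • v) v) (iteratedFDeriv ℝ 2 Q p₀ ![v, v]) 0 := by
  obtain ⟨ε, hε, hball⟩ := Metric.isOpen_iff.1 hU p₀ hp
  refine ⟨ε / (‖v‖ + 1), by positivity, ?_, ?_⟩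
  · intro t ht
    have hnorm : ‖t • v‖ < ε := by
      rw [norm_smul]
      have h1 : |t| < ε / (‖v‖ + 1) := abs_lt.2 ⟨ht.1, ht.2⟩
      have h2 : ‖t‖ * ‖v‖ ≤ |t| * (‖v‖ + 1) := by
        rw [Real.norm_eq_abs]
        have := abs_nonneg t
        nlinarith [norm_nonneg v]
      calc ‖t‖ * ‖v‖ ≤ |t| * (‖v‖ + 1) := h2
        _ < (ε / (‖v‖ + 1)) * (‖v‖ + 1) := by
            apply mul_lt_mul_of_pos_right h1; positivity
        _ = ε := by field_simp
    have hmem : p₀ + t • v ∈ U := by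
      apply hball
      simp [Metric.mem_ball, dist_eq_norm, hnorm]
    refine ⟨hmem, ?_⟩
    have hline : HasDerivAt (fun s : ℝ => p₀ + s • v) v t := by
      exact ((hasDerivAt_const t p₀).add ((hasDerivAt_id t).smul_const v)).congr_deriv (by simp)
    have hdiff : DifferentiableAt ℝ Q (p₀ + t • v) :=
      (hQ.differentiableOn (by norm_num)).differentiableAt (hU.mem_nhds hmem)
    exact hdiff.hasFDerivAt.comp_hasDerivAt t hline
  · have hline : HasDerivAt (fun s : ℝ => p₀ + s • v) v 0 := by
      exact ((hasDerivAt_const (0:ℝ) p₀).add ((hasDerivAt_id (0:ℝ)).smul_const v)).congr_deriv (by simp)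
    have hCDA : ContDiffAt ℝ 2 Q p₀ := hQ.contDiffAt (hU.mem_nhds hp)
    have hfd : ContDiffAt ℝ 1 (fderiv ℝ Q) p₀ := hCDA.fderiv_right (by norm_num)
    have hdfd : DifferentiableAt ℝ (fderiv ℝ Q) p₀ := hfd.differentiableAt (by norm_num)
    have happ : HasFDerivAt (fun q => fderiv ℝ Q q v)
        ((ContinuousLinearMap.apply ℝ ℝ v).comp (fderiv ℝ (fderiv ℝ Q) p₀)) p₀ :=
      (ContinuousLinearMap.apply ℝ ℝ v).hasFDerivAt.comp p₀ hdfd.hasFDerivAt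
    have happ' : HasFDerivAt (fun q => fderiv ℝ Q q v)
        ((ContinuousLinearMap.apply ℝ ℝ v).comp (fderiv ℝ (fderiv ℝ Q) p₀)) (p₀ + (0:ℝ) • v) := by
      simpa using happ
    have := happ'.comp_hasDerivAt 0 hline
    have heq : iteratedFDeriv ℝ 2 Q p₀ ![v, v] = fderiv ℝ (fderiv ℝ Q) p₀ v v := by
      rw [iteratedFDeriv_two_apply]
      simp
    rw [heq]
    exact this

theorem max_principle_half_ball (n : ℕ) (a C₀ : ℝ)
    (ha : a ∈ Set.Ioo (-1:ℝ) 0) (hC₀ : 0 < C₀) :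
    ∃ μ > 0, ∀ (Q : EuclideanSpace ℝ (Fin n) × ℝ → ℝ)
      (xstar : EuclideanSpace ℝ (Fin n)),
      ContinuousOn Q {p | ‖p.1 - xstar‖ ^ 2 + p.2 ^ 2 ≤ 1 ∧ 0 ≤ p.2} →
      ContDiffOn ℝ 2 Q {p | ‖p.1 - xstar‖ ^ 2 + p.2 ^ 2 < 1 ∧ 0 < p.2} →
      (∀ p : EuclideanSpace ℝ (Fin n) × ℝ,
        ‖p.1 - xstar‖ ^ 2 + p.2 ^ 2 ≤ 1 → 0 ≤ p.2 → 0 ≤ Q p) →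
      (∀ p : EuclideanSpace ℝ (Fin n) × ℝ,
        ‖p.1 - xstar‖ ^ 2 + p.2 ^ 2 < 1 → 0 < p.2 →
        (∑ i : Fin n, iteratedFDeriv ℝ 2 Q p
            ![(EuclideanSpace.single i 1, (0:ℝ)), (EuclideanSpace.single i 1, (0:ℝ))])
          + iteratedFDeriv ℝ 2 Q p ![((0 : EuclideanSpace ℝ (Fin n)), (1:ℝ)),
              ((0 : EuclideanSpace ℝ (Fin n)), (1:ℝ))]
          + (a / p.2) * fderiv ℝ Q p ((0 : EuclideanSpace ℝ (Fin n)), (1:ℝ)) ≤ -1) →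
      (∀ x : EuclideanSpace ℝ (Fin n), ‖x - xstar‖ < 1 →
        ∃ L : ℝ, Tendsto (fun y : ℝ =>
            y ^ a * deriv (fun y' : ℝ => Q (x, y')) y) (nhdsWithin 0 (Set.Ioi 0))
            (nhds L) ∧ |L| ≤ C₀ * Q (x, 0)) →
      ((∀ p : EuclideanSpace ℝ (Fin n) × ℝ,
          ‖p.1 - xstar‖ ^ 2 + p.2 ^ 2 ≤ 1 → 0 ≤ p.2 →
          Q p ≥ μ ^ 2 + μ * p.2 ^ (1 - a)
            - (1 / (2 * ((n:ℝ) + 1))) * (‖p.1 - xstar‖ ^ 2 + p.2 ^ 2)) ∧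
        Q (xstar, 0) ≥ μ ^ 2) := by
  obtain ⟨ha1, ha2⟩ := ha
  set N : ℝ := (n:ℝ) + 1 with hN
  have hNpos : (0:ℝ) < N := by positivity
  set κ : ℝ := 1 / (2 * N) with hκ
  have hκpos : 0 < κ := by positivity
  set μ : ℝ := min (1/(2*(C₀+1))) (1/(4*N)) with hμ
  have hμpos : 0 < μ := lt_min (by positivity) (by positivity)
  have hμb : 4*N*μ ≤ 1 := by
    have h := min_le_right (1/(2*(C₀+1))) (1/(4*N))
    rw [← hμ] at h
    rw [show (4:ℝ)*N*μ = μ*(4*N) by ring]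
    rw [← le_div_iff₀ (by positivity)]
    exact h
  have hμC : C₀ * μ ≤ 1/2 := by
    have h := min_le_left (1/(2*(C₀+1))) (1/(4*N))
    rw [← hμ] at h
    have h2 : μ * (2*(C₀+1)) ≤ 1 := by
      rw [← le_div_iff₀ (by positivity)]
      exact h
    nlinarith
  have hN1 : (1:ℝ) ≤ N := by
    have : (0:ℝ) ≤ (n:ℝ) := Nat.cast_nonneg n
    simp only [hN]; linarith
  have hμ1 : μ^2 + μ ≤ κ := by
    have hμ4 : 4*μ ≤ 1 := by nlinarith
    have hκN : κ * (2*N) = 1 := by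
      simp only [hκ]; field_simp
    nlinarith
  refine ⟨μ, hμpos, ?_⟩
  intro Q xstar hQcont hQ2 hQnn hPDE hNeu
  set K : Set (EuclideanSpace ℝ (Fin n) × ℝ) :=
    {p | ‖p.1 - xstar‖ ^ 2 + p.2 ^ 2 ≤ 1 ∧ 0 ≤ p.2} with hK
  set U : Set (EuclideanSpace ℝ (Fin n) × ℝ) :=
    {p | ‖p.1 - xstar‖ ^ 2 + p.2 ^ 2 < 1 ∧ 0 < p.2} with hU
  have hUK : U ⊆ K := fun p hp => ⟨le_of_lt hp.1, le_of_lt hp.2⟩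
  set W : EuclideanSpace ℝ (Fin n) × ℝ → ℝ :=
    fun p => Q p - μ^2 - μ * p.2 ^ (1-a) + κ * (‖p.1 - xstar‖^2 + p.2^2) with hW
  have hfcont : Continuous (fun p : EuclideanSpace ℝ (Fin n) × ℝ => ‖p.1 - xstar‖^2 + p.2^2) := by
    fun_prop
  have hUopen : IsOpen U := by
    apply IsOpen.inter
    · exact isOpen_lt hfcont continuous_const
    · exact isOpen_lt continuous_const continuous_snd
  have hrpowc : Continuous (fun y : ℝ => y ^ (1-a)) := by
    rw [continuous_iff_continuousAt]
    intro x
    exact Real.continuousAt_rpow_const x (1-a) (Or.inr (by linarith))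
  have hWcont : ContinuousOn W K := by
    apply ContinuousOn.add
    · apply ContinuousOn.sub
      · exact hQcont.sub continuousOn_const
      · exact (continuous_const.mul (hrpowc.comp continuous_snd)).continuousOn
    · exact (continuous_const.mul hfcont).continuousOn
  have hKclosed : IsClosed K := by
    apply IsClosed.inter
    · exact isClosed_le hfcont continuous_const
    · exact isClosed_le continuous_const continuous_snd
  have hKbdd : Bornology.IsBounded K := by
    apply (Metric.isBounded_closedBall (x := (0 : EuclideanSpace ℝ (Fin n) × ℝ))
      (r := ‖xstar‖ + 2)).subset
    intro p hp
    obtain ⟨hp1, hp2⟩ := hp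
    have h1 : ‖p.1 - xstar‖ ≤ 1 := by nlinarith [norm_nonneg (p.1 - xstar), sq_nonneg p.2]
    have h2 : |p.2| ≤ 1 := by
      rw [abs_le]; constructor <;> nlinarith [norm_nonneg (p.1 - xstar)]
    have h3 : ‖p.1‖ ≤ ‖xstar‖ + 1 := by
      calc ‖p.1‖ = ‖p.1 - xstar + xstar‖ := by rw [sub_add_cancel]
        _ ≤ ‖p.1 - xstar‖ + ‖xstar‖ := norm_add_le _ _
        _ ≤ ‖xstar‖ + 1 := by linarith
    simp only [Metric.mem_closedBall, dist_zero_right, Prod.norm_def]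
    apply max_le
    · linarith [norm_nonneg xstar]
    · rw [Real.norm_eq_abs]; linarith [norm_nonneg xstar]
  have hKcompact : IsCompact K := Metric.isCompact_of_isClosed_isBounded hKclosed hKbdd
  have hKne : K.Nonempty := ⟨(xstar, 0), by simp [hK]⟩
  obtain ⟨p₀, hp₀K, hp₀min⟩ := hKcompact.exists_isMinOn hKne hWcont
  have hmin : ∀ q ∈ K, W p₀ ≤ W q := fun q hq => hp₀min hq
  have hmain : 0 ≤ W p₀ := by
    by_contra hneg
    push_neg at hneg
    obtain ⟨hp₀1, hp₀2⟩ := hp₀K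
    rcases eq_or_lt_of_le hp₀1 with hb | hint
    · -- Case A : on the sphere
      have hy1 : p₀.2 ≤ 1 := by nlinarith [norm_nonneg (p₀.1 - xstar)]
      have hr1 : p₀.2 ^ (1-a) ≤ 1 := Real.rpow_le_one hp₀2 hy1 (by linarith)
      have hQnn0 : 0 ≤ Q p₀ := hQnn p₀ hp₀1 hp₀2
      have : W p₀ = Q p₀ - μ^2 - μ * p₀.2 ^ (1-a) + κ := by
        simp only [hW]; rw [hb]; ring
      nlinarith
    · rcases eq_or_lt_of_le hp₀2 with hy0 | hy0
      · -- Case C : Neumann boundary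
        have hy0' : p₀.2 = 0 := hy0.symm
        have hs1 : ‖p₀.1 - xstar‖^2 < 1 := by nlinarith [sq_nonneg p₀.2]
        have hx₀ : ‖p₀.1 - xstar‖ < 1 := by nlinarith [norm_nonneg (p₀.1 - xstar)]
        obtain ⟨L, hLt, hLb⟩ := hNeu p₀.1 hx₀
        have hp₀eq : p₀ = (p₀.1, (0:ℝ)) := by rw [← hy0']
        have hκS : 0 ≤ κ * ‖p₀.1 - xstar‖^2 := by positivity
        have hWp₀ : W p₀ = Q p₀ - μ^2 + κ * ‖p₀.1 - xstar‖^2 := by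
          simp only [hW]
          rw [hy0', Real.zero_rpow (by intro h; linarith : (1:ℝ) - a ≠ 0)]
          ring
        have hQp : Q p₀ < μ^2 := by
          rw [hWp₀] at hneg; linarith
        have hQ0 : Q (p₀.1, (0:ℝ)) < μ^2 := by rw [← hp₀eq]; exact hQp
        have hQ0nn : 0 ≤ Q (p₀.1, (0:ℝ)) := by
          rw [← hp₀eq]; exact hQnn p₀ hp₀1 hp₀2
        have hLlt : L < μ*(1-a) := by
          have h1 : L ≤ |L| := le_abs_self L
          have h2 : C₀ * Q (p₀.1, (0:ℝ)) < C₀ * μ^2 := by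
            exact mul_lt_mul_of_pos_left hQ0 hC₀
          nlinarith
        set ε : ℝ := (μ*(1-a) - L)/2 with hε
        have hεpos : 0 < ε := by rw [hε]; linarith
        have hμε : μ*(1-a) = L + 2*ε := by rw [hε]; ring
        set r : ℝ := Real.sqrt (1 - ‖p₀.1 - xstar‖^2) with hr
        have hrpos : 0 < r := Real.sqrt_pos.2 (by linarith)
        have hrsq : r^2 = 1 - ‖p₀.1 - xstar‖^2 := Real.sq_sqrt (by linarith)
        have hrprop : ∀ y : ℝ, 0 ≤ y → y < r → ‖p₀.1 - xstar‖^2 + y^2 < 1 := by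
          intro y hy1 hy2
          nlinarith
        have F1 : ∀ᶠ y in 𝓝[>] (0:ℝ),
            y ^ a * deriv (fun y' : ℝ => Q (p₀.1, y')) y < L + ε :=
          hLt.eventually (gt_mem_nhds (by linarith : L < L + ε))
        have F2 : ∀ᶠ y in 𝓝[>] (0:ℝ), y ^ (1+a) < ε * N := by
          have hcont0 : ContinuousAt (fun y : ℝ => y ^ (1+a)) 0 :=
            Real.continuousAt_rpow_const 0 (1+a) (Or.inr (by linarith))
          have htend : Tendsto (fun y : ℝ => y ^ (1+a)) (𝓝[>] (0:ℝ)) (𝓝 0) := by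
            have h0 : (0:ℝ) ^ ((1:ℝ)+a) = 0 :=
              Real.zero_rpow (by intro h; linarith : (1:ℝ) + a ≠ 0)
            have := hcont0.tendsto
            rw [h0] at this
            exact this.mono_left nhdsWithin_le_nhds
          exact htend.eventually (gt_mem_nhds (by positivity : (0:ℝ) < ε * N))
        have F3 : ∀ᶠ y in 𝓝[>] (0:ℝ), y < r :=
          eventually_of_mem (Ioo_mem_nhdsGT_of_mem ⟨le_refl 0, hrpos⟩) (fun y hy => hy.2)
        obtain ⟨u, hu, hsub⟩ := mem_nhdsGT_iff_exists_Ioo_subset.1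
          ((F1.and F2).and F3)
        have hu0 : (0:ℝ) < u := hu
        have hκ2 : κ * (2*N) = 1 := by
          simp only [hκ]; field_simp
        -- derivative of the 1-d slice is negative on (0, u)
        have hderivneg : ∀ y ∈ Set.Ioo (0:ℝ) u,
            HasDerivAt (fun y' : ℝ => W (p₀.1, y'))
              (deriv (fun y' : ℝ => Q (p₀.1, y')) y - μ*(1-a)*y^(1-a-1) + κ*(2*y)) y ∧
            deriv (fun y' : ℝ => Q (p₀.1, y')) y - μ*(1-a)*y^(1-a-1) + κ*(2*y) < 0 := by
          intro y hy
          have hyr : y < r := (hsub hy).2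
          have hP1 : y ^ a * deriv (fun y' : ℝ => Q (p₀.1, y')) y < L + ε := (hsub hy).1.1
          have hP2 : y ^ (1+a) < ε * N := (hsub hy).1.2
          have hUy : ((p₀.1, y) : EuclideanSpace ℝ (Fin n) × ℝ) ∈ U :=
            ⟨hrprop y hy.1.le hyr, hy.1⟩
          have hline : HasDerivAt (fun y' : ℝ => ((p₀.1, y') : EuclideanSpace ℝ (Fin n) × ℝ))
              (((0 : EuclideanSpace ℝ (Fin n)), (1:ℝ))) y :=
            (hasDerivAt_const y p₀.1).prodMk (hasDerivAt_id y)
          have hQdiffat : DifferentiableAt ℝ Q (p₀.1, y) :=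
            (hQ2.differentiableOn (by norm_num)).differentiableAt (hUopen.mem_nhds hUy)
          have hqd : HasDerivAt (fun y' : ℝ => Q (p₀.1, y'))
              (fderiv ℝ Q (p₀.1, y) ((0 : EuclideanSpace ℝ (Fin n)), (1:ℝ))) y :=
            hQdiffat.hasFDerivAt.comp_hasDerivAt y hline
          have hqD : HasDerivAt (fun y' : ℝ => Q (p₀.1, y'))
              (deriv (fun y' : ℝ => Q (p₀.1, y')) y) y :=
            hqd.differentiableAt.hasDerivAt
          have hrpow : HasDerivAt (fun y' : ℝ => μ * y' ^ (1-a)) (μ*(1-a)*y^(1-a-1)) y := by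
            have := (Real.hasDerivAt_rpow_const
              (x := y) (p := 1-a) (Or.inl (ne_of_gt hy.1))).const_mul μ
            exact this.congr_deriv (by ring)
          have hquad : HasDerivAt (fun y' : ℝ => κ * (‖p₀.1 - xstar‖^2 + y'^2)) (κ*(2*y)) y := by
            have := ((hasDerivAt_pow 2 y).const_add (‖p₀.1 - xstar‖^2)).const_mul κ
            exact this.congr_deriv (by norm_num)
          have htotal : HasDerivAt (fun y' : ℝ => W (p₀.1, y'))
              (deriv (fun y' : ℝ => Q (p₀.1, y')) y - μ*(1-a)*y^(1-a-1) + κ*(2*y)) y := by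
            have hfuneq : (fun y' : ℝ => W (p₀.1, y'))
                = fun y' : ℝ => ((Q (p₀.1, y') - μ^2) - μ * y' ^ (1-a))
                  + κ * (‖p₀.1 - xstar‖^2 + y'^2) := by
              funext y'
              simp only [hW]
            rw [hfuneq]
            have := ((hqD.sub_const (μ^2)).sub hrpow).add hquad
            exact this.congr_deriv (by ring)
          refine ⟨htotal, ?_⟩
          -- now negativity
          have hya : (0:ℝ) < y ^ a := Real.rpow_pos_of_pos hy.1 a
          have hIpos : (0:ℝ) < (y ^ a)⁻¹ := inv_pos.2 hya
          have hexp1 : y ^ ((1:ℝ)-a-1) = (y ^ a)⁻¹ := by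
            rw [show (1:ℝ)-a-1 = -a by ring, Real.rpow_neg hy.1.le]
          have hDlt : deriv (fun y' : ℝ => Q (p₀.1, y')) y < (L+ε) * (y ^ a)⁻¹ := by
            have h1 : deriv (fun y' : ℝ => Q (p₀.1, y')) y
                = (y ^ a)⁻¹ * (y ^ a * deriv (fun y' : ℝ => Q (p₀.1, y')) y) := by
              field_simp
            rw [h1]
            calc (y ^ a)⁻¹ * (y ^ a * deriv (fun y' : ℝ => Q (p₀.1, y')) y)
                < (y ^ a)⁻¹ * (L + ε) := mul_lt_mul_of_pos_left hP1 hIpos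
              _ = (L+ε) * (y ^ a)⁻¹ := by ring
          have hquadlt : κ*(2*y) < ε * (y ^ a)⁻¹ := by
            have e1 : κ*(2*y) = y / N := by
              rw [hκ]; field_simp
            have h3 : y ^ ((1:ℝ)+a) * (y ^ a)⁻¹ < (ε * N) * (y ^ a)⁻¹ :=
              mul_lt_mul_of_pos_right hP2 hIpos
            have h4 : y ^ ((1:ℝ)+a) * (y ^ a)⁻¹ = y := by
              rw [Real.rpow_add hy.1, Real.rpow_one]
              field_simp
            rw [e1, div_lt_iff₀ hNpos]
            calc y = y ^ ((1:ℝ)+a) * (y ^ a)⁻¹ := h4.symm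
              _ < (ε * N) * (y ^ a)⁻¹ := h3
              _ = ε * (y ^ a)⁻¹ * N := by ring
          rw [hexp1]
          have hμεI : μ*(1-a)*(y ^ a)⁻¹ = (L + 2*ε) * (y ^ a)⁻¹ := by rw [hμε]
          rw [hμεI]
          nlinarith
        -- strict decrease gives contradiction with minimality
        have hu2 : u/2 ∈ Set.Ioo (0:ℝ) u := ⟨by positivity, by linarith⟩
        have hu2r : u/2 < r := (hsub hu2).2
        have hmem : ∀ y ∈ Set.Icc (0:ℝ) (u/2),
            ((p₀.1, y) : EuclideanSpace ℝ (Fin n) × ℝ) ∈ K := by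
          intro y hy
          refine ⟨(hrprop y hy.1 (lt_of_le_of_lt hy.2 hu2r)).le, hy.1⟩
        have hcontline : ContinuousOn
            (fun y : ℝ => ((p₀.1, y) : EuclideanSpace ℝ (Fin n) × ℝ)) (Set.Icc 0 (u/2)) :=
          (continuous_const.prodMk continuous_id).continuousOn
        have hconth : ContinuousOn (fun y : ℝ => W (p₀.1, y)) (Set.Icc 0 (u/2)) :=
          hWcont.comp hcontline hmem
        have hanti : StrictAntiOn (fun y : ℝ => W (p₀.1, y)) (Set.Icc 0 (u/2)) := by
          apply strictAntiOn_of_deriv_neg (convex_Icc 0 (u/2)) hconth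
          intro y hy
          rw [interior_Icc] at hy
          have hy' : y ∈ Set.Ioo (0:ℝ) u := ⟨hy.1, by linarith [hy.2]⟩
          obtain ⟨hd, hneg'⟩ := hderivneg y hy'
          rw [hd.deriv]
          exact hneg'
        have hlt : W (p₀.1, u/2) < W (p₀.1, (0:ℝ)) :=
          hanti ⟨le_refl 0, by positivity⟩ ⟨by positivity, le_refl _⟩ (by positivity)
        have hgem := hmin (p₀.1, u/2) (hmem (u/2) ⟨by positivity, le_refl _⟩)
        rw [← hp₀eq] at hlt
        linarith
      · -- Case B : interior
        have hp₀U : p₀ ∈ U := ⟨hint, hy0⟩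
        have hy0' : p₀.2 ≠ 0 := ne_of_gt hy0
        -- tangential directions
        have hIbound : ∀ i : Fin n, -(κ*2) ≤ iteratedFDeriv ℝ 2 Q p₀
            ![(EuclideanSpace.single i 1, (0:ℝ)), (EuclideanSpace.single i 1, (0:ℝ))] := by
          intro i
          obtain ⟨δ, hδ, hD, hD2⟩ := dirDeriv hUopen hQ2 hp₀U
            ((EuclideanSpace.single i 1, (0:ℝ)))
          set v : EuclideanSpace ℝ (Fin n) × ℝ := (EuclideanSpace.single i 1, (0:ℝ)) with hv
          set b : ℝ := inner ℝ (p₀.1 - xstar) (EuclideanSpace.single i (1:ℝ)) with hb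
          have hcoord1 : ∀ t : ℝ, (p₀ + t • v).1 = p₀.1 + t • EuclideanSpace.single i (1:ℝ) := by
            intro t; simp [hv]
          have hcoord2 : ∀ t : ℝ, (p₀ + t • v).2 = p₀.2 := by
            intro t; simp [hv]
          have hexp : ∀ t : ℝ, ‖(p₀ + t • v).1 - xstar‖^2
              = ‖p₀.1 - xstar‖^2 + 2*b*t + t^2 := by
            intro t
            rw [hcoord1 t]
            have heq : p₀.1 + t • EuclideanSpace.single i (1:ℝ) - xstar
                = (p₀.1 - xstar) + t • EuclideanSpace.single i (1:ℝ) := by abel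
            rw [heq, norm_add_sq_real, real_inner_smul_right, norm_smul]
            rw [EuclideanSpace.norm_single]
            simp only [norm_one, mul_one, Real.norm_eq_abs, mul_pow, sq_abs]
            rw [← hb]; ring
          have hWline : ∀ t : ℝ, W (p₀ + t • v)
              = (Q (p₀ + t • v) - (μ^2 + μ * p₀.2 ^ (1-a)))
                + κ * (‖p₀.1 - xstar‖^2 + 2*b*t + t^2 + p₀.2^2) := by
            intro t
            simp only [hW]
            rw [hexp t, hcoord2 t]
            ring
          have harg1 : ∀ t ∈ Set.Ioo (-δ) δ, HasDerivAt (fun s => W (p₀ + s • v))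
              (fderiv ℝ Q (p₀ + t • v) v + κ * (2*b + 2*t)) t := by
            intro t ht
            have hfun : (fun s : ℝ => W (p₀ + s • v))
                = fun s => (Q (p₀ + s • v) - (μ^2 + μ * p₀.2 ^ (1-a)))
                  + κ * (‖p₀.1 - xstar‖^2 + 2*b*s + s^2 + p₀.2^2) := funext hWline
            rw [hfun]
            have hpoly : HasDerivAt
                (fun s : ℝ => κ * (‖p₀.1 - xstar‖^2 + 2*b*s + s^2 + p₀.2^2))
                (κ * (2*b + 2*t)) t := by
              have h1 : HasDerivAt
                  (fun s : ℝ => ‖p₀.1 - xstar‖^2 + 2*b*s + s^2 + p₀.2^2) (2*b + 2*t) t := by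
                have h2 := (((hasDerivAt_const t (‖p₀.1 - xstar‖^2)).add
                  ((hasDerivAt_id t).const_mul (2*b))).add (hasDerivAt_pow 2 t)).add
                  (hasDerivAt_const t (p₀.2^2))
                exact h2.congr_deriv (by norm_num)
              have := h1.const_mul κ
              convert this using 1 <;> ring
            exact ((hD t ht).2.sub_const _).add hpoly
          have harg2 : HasDerivAt
              (fun t : ℝ => fderiv ℝ Q (p₀ + t • v) v + κ * (2*b + 2*t))
              (iteratedFDeriv ℝ 2 Q p₀ ![v, v] + κ * 2) 0 := by
            have hpoly : HasDerivAt (fun t : ℝ => κ * (2*b + 2*t)) (κ * 2) 0 := by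
              have h1 : HasDerivAt (fun t : ℝ => 2*b + 2*t) 2 0 := by
                have := ((hasDerivAt_id (0:ℝ)).const_mul (2:ℝ)).const_add (2*b)
                exact this.congr_deriv (by norm_num)
              have := h1.const_mul κ
              convert this using 1 <;> ring
            exact hD2.add hpoly
          have harg3 : ∀ t ∈ Set.Ioo (-δ) δ, W (p₀ + (0:ℝ) • v) ≤ W (p₀ + t • v) := by
            intro t ht
            have := hmin _ (hUK (hD t ht).1)
            simpa using this
          obtain ⟨-, h2⟩ := key1d (fun s => W (p₀ + s • v))
            (fun t => fderiv ℝ Q (p₀ + t • v) v + κ * (2*b + 2*t))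
            (iteratedFDeriv ℝ 2 Q p₀ ![v, v] + κ * 2) δ hδ harg1 harg2 harg3
          linarith
        -- vertical direction
        obtain ⟨δ, hδ, hD, hD2⟩ := dirDeriv hUopen hQ2 hp₀U
          (((0 : EuclideanSpace ℝ (Fin n)), (1:ℝ)))
        set vy : EuclideanSpace ℝ (Fin n) × ℝ := ((0 : EuclideanSpace ℝ (Fin n)), (1:ℝ)) with hvy
        have hcoord1 : ∀ t : ℝ, (p₀ + t • vy).1 = p₀.1 := by
          intro t; simp [hvy]
        have hcoord2 : ∀ t : ℝ, (p₀ + t • vy).2 = p₀.2 + t := by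
          intro t; simp [hvy]
        have hposy : ∀ t ∈ Set.Ioo (-δ) δ, 0 < p₀.2 + t := by
          intro t ht
          have := (hD t ht).1.2
          rwa [hcoord2 t] at this
        have hWline : ∀ t : ℝ, W (p₀ + t • vy)
            = ((Q (p₀ + t • vy) - μ^2) - μ * (p₀.2 + t) ^ (1-a))
              + κ * (‖p₀.1 - xstar‖^2 + (p₀.2 + t)^2) := by
          intro t
          simp only [hW]
          rw [hcoord1 t, hcoord2 t]
        have harg1 : ∀ t ∈ Set.Ioo (-δ) δ, HasDerivAt (fun s => W (p₀ + s • vy))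
            (fderiv ℝ Q (p₀ + t • vy) vy - μ*(1-a)*(p₀.2+t)^(1-a-1) + κ*(2*(p₀.2+t))) t := by
          intro t ht
          have hfun : (fun s : ℝ => W (p₀ + s • vy))
              = fun s => ((Q (p₀ + s • vy) - μ^2) - μ * (p₀.2 + s) ^ (1-a))
                + κ * (‖p₀.1 - xstar‖^2 + (p₀.2 + s)^2) := funext hWline
          rw [hfun]
          have hbase : HasDerivAt (fun s : ℝ => p₀.2 + s) 1 t := (hasDerivAt_id t).const_add p₀.2
          have hrpow : HasDerivAt (fun s : ℝ => μ * (p₀.2 + s) ^ (1-a))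
              (μ*(1-a)*(p₀.2+t)^(1-a-1)) t := by
            have := (hbase.rpow_const (p := 1-a) (Or.inl (ne_of_gt (hposy t ht)))).const_mul μ
            exact this.congr_deriv (by ring)
          have hquad : HasDerivAt
              (fun s : ℝ => κ * (‖p₀.1 - xstar‖^2 + (p₀.2 + s)^2)) (κ*(2*(p₀.2+t))) t := by
            have := ((hbase.pow 2).const_add (‖p₀.1 - xstar‖^2)).const_mul κ
            exact this.congr_deriv (by norm_num)
          exact (((hD t ht).2.sub_const (μ^2)).sub hrpow).add hquad
        have harg2 : HasDerivAt
            (fun t : ℝ => fderiv ℝ Q (p₀ + t • vy) vy - μ*(1-a)*(p₀.2+t)^(1-a-1) + κ*(2*(p₀.2+t)))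
            (iteratedFDeriv ℝ 2 Q p₀ ![vy, vy] - μ*(1-a)*(1-a-1)*p₀.2^(1-a-1-1) + κ*2) 0 := by
          have hbase : HasDerivAt (fun s : ℝ => p₀.2 + s) 1 0 := (hasDerivAt_id 0).const_add p₀.2
          have hrpow : HasDerivAt (fun s : ℝ => μ*(1-a)*(p₀.2+s)^(1-a-1))
              (μ*(1-a)*(1-a-1)*p₀.2^(1-a-1-1)) 0 := by
            have h0 : p₀.2 + (0:ℝ) ≠ 0 := by rw [add_zero]; exact hy0'
            have := (hbase.rpow_const (p := 1-a-1) (Or.inl h0)).const_mul (μ*(1-a))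
            simp only [add_zero] at this
            exact this.congr_deriv (by ring)
          have hlin : HasDerivAt (fun t : ℝ => κ*(2*(p₀.2+t))) (κ*2) 0 := by
            have hbase2 : HasDerivAt (fun s : ℝ => 2*(p₀.2+s)) 2 0 := by
              have := ((hasDerivAt_id (0:ℝ)).const_add p₀.2).const_mul (2:ℝ)
              exact this.congr_deriv (by norm_num)
            have := hbase2.const_mul κ
            convert this using 1 <;> ring
          exact (hD2.sub hrpow).add hlin
        have harg3 : ∀ t ∈ Set.Ioo (-δ) δ, W (p₀ + (0:ℝ) • vy) ≤ W (p₀ + t • vy) := by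
          intro t ht
          have := hmin _ (hUK (hD t ht).1)
          simpa using this
        obtain ⟨h1, h2⟩ := key1d (fun s => W (p₀ + s • vy))
          (fun t => fderiv ℝ Q (p₀ + t • vy) vy - μ*(1-a)*(p₀.2+t)^(1-a-1) + κ*(2*(p₀.2+t)))
          (iteratedFDeriv ℝ 2 Q p₀ ![vy, vy] - μ*(1-a)*(1-a-1)*p₀.2^(1-a-1-1) + κ*2)
          δ hδ harg1 harg2 harg3
        simp only [zero_smul, add_zero] at h1 h2
        -- extract the first-derivative identity
        have hF : fderiv ℝ Q p₀ vy = μ*(1-a)*p₀.2^(1-a-1) - κ*(2*p₀.2) := by linarith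
        -- rewrite the second-exponent rpow
        have hT2 : p₀.2^(1-a-1-1) = p₀.2^(1-a-1) / p₀.2 := by
          rw [Real.rpow_sub hy0, Real.rpow_one]
        rw [hT2] at h2
        -- sum bound
        have hsumb : -(κ*2)*(n:ℝ) ≤ ∑ i : Fin n, iteratedFDeriv ℝ 2 Q p₀
            ![(EuclideanSpace.single i 1, (0:ℝ)), (EuclideanSpace.single i 1, (0:ℝ))] := by
          calc -(κ*2)*(n:ℝ) = ∑ _i : Fin n, -(κ*2) := by
                rw [Finset.sum_const, Finset.card_univ, Fintype.card_fin]
                simp [mul_comm]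
            _ ≤ _ := Finset.sum_le_sum (fun i _ => hIbound i)
        have hPDE0 := hPDE p₀ hint hy0
        have hκ2 : κ * (2*N) = 1 := by
          simp only [hκ]; field_simp
        have hkey : μ*(1-a)*(1-a-1)*(p₀.2^(1-a-1)/p₀.2)
            + (a/p₀.2)*(μ*(1-a)*p₀.2^(1-a-1)) = 0 := by
          field_simp
          ring
        have hFexp : (a/p₀.2) * fderiv ℝ Q p₀ vy
            = (a/p₀.2)*(μ*(1-a)*p₀.2^(1-a-1)) - κ*2*a := by
          rw [hF]
          field_simp
        have haneg : 0 < -(κ*2*a) := by nlinarith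
        have hNn : N = (n:ℝ) + 1 := hN
        nlinarith [hPDE0, hsumb, h2, hkey, hFexp]
  constructor
  · intro p hp1 hp2
    have h := le_trans hmain (hmin p ⟨hp1, hp2⟩)
    simp only [hW] at h
    linarith
  · have h := le_trans hmain (hmin (xstar, 0) (by simp [hK]))
    simp only [hW] at h
    rw [Real.zero_rpow (by linarith : (1:ℝ) - a ≠ 0)] at h
    simp only [sub_self, norm_zero] at h
    norm_num at h
    linarith
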